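/- Let G be an r-regular simple graph with n vertices and m edges, where r ≥ 2 (so that m ≥ n), and let q_1 ≤ q_2 ≤ … ≤ q_n = 2r be the eigenvalues of Q(G) listed with multiplicity. Then f(λ, G^{0+1}) = [(λ-m)(λ-n-4r+4) - mn]·(λ-n-2r+4)^{m-n}·(λ-m)^{n-1}·∏_{i=1}^{n-1}(λ - n - 2r + 4 - q_i). -/

import Mathlib

open Classical

/-- The four symbols `0, 1, +, -` used in `xyz`-transformations. -/
inductive XYZ : Type
  | zero | one | plus | minus

namespace XYZ

/-- The relation on the vertices of a graph `H` given by a symbol: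
`0` gives the empty graph, `1` the complete graph, `+` the graph itself,
`-` its complement. -/
def rel {W : Type*} (H : SimpleGraph W) : XYZ → W → W → Prop
  | .zero => fun _ _ => False
  | .one  => fun u v => u ≠ v
  | .plus => fun u v => H.Adj u v
  | .minus => fun u v => u ≠ v ∧ ¬ H.Adj u v

/-- The incidence relation between a vertex and an edge given by a symbol `z`:
`+` means incident, `-` means non-incident, `0` never, `1` always. -/
def inc {W : Type*} (G : SimpleGraph W) : XYZ → W → G.edgeSet → Prop
  | .zero => fun _ _ => False
  | .one  => fun _ _ => True
  | .plus => fun v e => v ∈ (e : Sym2 W)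
  | .minus => fun v e => v ∉ (e : Sym2 W)

theorem rel_symm {W : Type*} (H : SimpleGraph W) (x : XYZ) {u v : W}
    (h : rel H x u v) : rel H x v u := by
  cases x with
  | zero => exact h.elim
  | one => exact (h : u ≠ v).symm
  | plus => exact H.adj_symm h
  | minus => exact ⟨(h.1).symm, fun h' => h.2 (H.adj_symm h')⟩

theorem rel_irrefl {W : Type*} (H : SimpleGraph W) (x : XYZ) {u : W}
    (h : rel H x u u) : False := by
  cases x with
  | zero => exact h
  | one => exact h rfl
  | plus => exact H.ne_of_adj h rfl
  | minus => exact h.1 rfl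

end XYZ

/-- The `xyz`-transformation `G^{xyz}` of a graph `G`: its vertex set is
`V(G) ⊕ E(G)`; two vertices of `G` are adjacent according to the symbol `x`
(applied to `G`), two edges according to the symbol `y` (applied to the line
graph of `G`), and a vertex and an edge according to the symbol `z`
(`+` = incidence graph `B(G)`, `-` = non-incidence graph `B^c(G)`,
`0` = no vertex-edge edges, `1` = all vertex-edge edges). -/
def xyzTransform {V : Type*} (G : SimpleGraph V) (x y z : XYZ) :
    SimpleGraph (V ⊕ G.edgeSet) where
  Adj a b :=
    match a, b with
    | Sum.inl u, Sum.inl v => XYZ.rel G x u v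
    | Sum.inr e, Sum.inr f => XYZ.rel G.lineGraph y e f
    | Sum.inl v, Sum.inr e => XYZ.inc G z v e
    | Sum.inr e, Sum.inl v => XYZ.inc G z v e
  symm := by
    constructor
    rintro (u | e) (v | f) h
    · exact XYZ.rel_symm G x h
    · exact h
    · exact h
    · exact XYZ.rel_symm G.lineGraph y h
  loopless := by
    constructor
    rintro (u | e) h
    · exact XYZ.rel_irrefl G x h
    · exact XYZ.rel_irrefl G.lineGraph y h

/-- The signless Laplacian matrix `Q(G) = D(G) + A(G)` of a graph. -/
noncomputable def signlessLaplacian {V : Type*} [Fintype V] (G : SimpleGraph V) :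
    Matrix V V ℝ :=
  Matrix.of fun u v =>
    (if u = v then (G.degree u : ℝ) else 0) + (if G.Adj u v then 1 else 0)

/-- The signless Laplacian characteristic polynomial
`f(λ, G) = det (λ I - Q(G))`, evaluated at a real number `λ`. -/
noncomputable def fQ {V : Type*} [Fintype V] (G : SimpleGraph V) (lam : ℝ) : ℝ :=
  Matrix.det (lam • (1 : Matrix V V ℝ) - signlessLaplacian G)


open Matrix Finset

namespace XYZAux

variable {V : Type*} [Fintype V]

lemma degree_real {W : Type*} [Fintype W] (H : SimpleGraph W) (u : W) :
    ((H.degree u : ℝ)) = ∑ w, if H.Adj u w then (1:ℝ) else 0 := by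
  classical
  rw [SimpleGraph.degree, SimpleGraph.neighborFinset_eq_filter, Finset.card_filter]
  push_cast
  exact Finset.sum_congr rfl fun w _ => by split <;> simp

/-- the incidence matrix of a graph -/
noncomputable def incMat (G : SimpleGraph V) : Matrix V G.edgeSet ℝ :=
  Matrix.of fun v e => if v ∈ (e : Sym2 V) then 1 else 0

variable (G : SimpleGraph V)

lemma sum_incMat_col (v : V) : ∑ e : G.edgeSet, incMat G v e = (G.degree v : ℝ) := by
  classical
  have h1 : ∑ e : G.edgeSet, incMat G v e
      = ((univ.filter (fun e : G.edgeSet => v ∈ (e : Sym2 V))).card : ℝ) := by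
    rw [Finset.card_filter]
    push_cast
    exact Finset.sum_congr rfl fun e _ => by by_cases h : v ∈ (e : Sym2 V) <;> simp [incMat, h]
  have h2 : (univ.filter (fun e : G.edgeSet => v ∈ (e : Sym2 V))).card
      = Fintype.card {e : G.edgeSet // v ∈ (e : Sym2 V)} := (Fintype.card_subtype _).symm
  have h3 : Fintype.card {e : G.edgeSet // v ∈ (e : Sym2 V)}
      = Fintype.card (G.incidenceSet v) := by
    apply Fintype.card_congr
    exact ⟨fun x => ⟨x.1.1, x.1.2, x.2⟩, fun y => ⟨⟨y.1, y.2.1⟩, y.2.2⟩,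
      fun _ => rfl, fun _ => rfl⟩
  have h4 : Fintype.card (G.incidenceSet v) = G.degree v := by
    convert G.card_incidenceSet_eq_degree (v := v) using 2
  rw [h1, h2, h3, h4]

lemma sum_incMat_row (e : G.edgeSet) : ∑ v, incMat G v e = 2 := by
  classical
  obtain ⟨e, he⟩ := e
  induction e with
  | _ u w =>
    have hadj : G.Adj u w := by rwa [SimpleGraph.mem_edgeSet] at he
    have hne : u ≠ w := hadj.ne
    have key : ∀ x, (if x ∈ (s(u,w) : Sym2 V) then (1:ℝ) else 0)
        = (if x = u then (1:ℝ) else 0) + (if x = w then (1:ℝ) else 0) := by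
      intro x
      by_cases h1 : x = u <;> by_cases h2 : x = w <;>
        simp [Sym2.mem_iff, h1, h2] <;> aesop
    simp only [incMat, Matrix.of_apply]
    rw [Finset.sum_congr rfl fun x _ => key x, Finset.sum_add_distrib]
    simp only [Finset.sum_ite_eq', Finset.mem_univ, if_pos]
    norm_num

lemma incMat_mul_transpose :
    incMat G * (incMat G)ᵀ = signlessLaplacian G := by
  classical
  ext u v
  rw [Matrix.mul_apply]
  simp only [transpose_apply, incMat, Matrix.of_apply, signlessLaplacian]
  by_cases huv : u = v
  · subst huv
    simp only [if_pos rfl, G.irrefl, if_neg not_false, add_zero]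
    rw [← sum_incMat_col G u]
    refine Finset.sum_congr rfl fun e _ => ?_
    by_cases h : u ∈ (e : Sym2 V) <;> simp [incMat, h]
  · have key : ∀ e : G.edgeSet, (u ∈ (e : Sym2 V) ∧ v ∈ (e : Sym2 V)) ↔ (e : Sym2 V) = s(u, v) :=
      fun e => Sym2.mem_and_mem_iff huv
    have step : ∀ e : G.edgeSet,
        (if u ∈ (e : Sym2 V) then (1:ℝ) else 0) * (if v ∈ (e : Sym2 V) then (1:ℝ) else 0)
        = if (e : Sym2 V) = s(u, v) then (1:ℝ) else 0 := by
      intro e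
      by_cases h1 : u ∈ (e : Sym2 V) <;> by_cases h2 : v ∈ (e : Sym2 V) <;>
        simp [h1, h2, ← key e]
    rw [Finset.sum_congr rfl fun e _ => step e]
    by_cases hadj : G.Adj u v
    · have hmem : s(u, v) ∈ G.edgeSet := hadj
      have hiff : ∀ e : G.edgeSet, ((e : Sym2 V) = s(u, v)) ↔ e = ⟨s(u,v), hmem⟩ := by
        intro e; rw [Subtype.ext_iff]
      rw [Finset.sum_congr rfl (fun (e : G.edgeSet) _ =>
        (by simp only [hiff e] : (if (e : Sym2 V) = s(u, v) then (1:ℝ) else 0)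
          = if e = ⟨s(u,v), hmem⟩ then (1:ℝ) else 0))]
      simp [huv, hadj]
    · have hnone : ∀ e : G.edgeSet, ¬((e : Sym2 V) = s(u, v)) := by
        intro e h
        exact hadj (by rw [← SimpleGraph.mem_edgeSet, ← h]; exact e.2)
      simp [hnone, huv, hadj]

lemma transpose_mul_incMat (e f : G.edgeSet) :
    ((incMat G)ᵀ * incMat G) e f
      = if e = f then 2 else (if G.lineGraph.Adj e f then 1 else 0) := by
  classical
  rw [Matrix.mul_apply]
  simp only [transpose_apply, incMat, Matrix.of_apply]
  by_cases hef : e = f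
  · subst hef
    rw [if_pos rfl]
    have key : ∀ v, (if v ∈ (e : Sym2 V) then (1:ℝ) else 0) * (if v ∈ (e : Sym2 V) then (1:ℝ) else 0)
        = if v ∈ (e : Sym2 V) then (1:ℝ) else 0 := fun v => by
      by_cases h : v ∈ (e : Sym2 V) <;> simp [h]
    rw [Finset.sum_congr rfl fun v _ => key v]
    have := sum_incMat_row G e
    simpa [incMat] using this
  · rw [if_neg hef]
    by_cases hadj : G.lineGraph.Adj e f
    · obtain ⟨-, c, hc1, hc2⟩ := SimpleGraph.lineGraph_adj_iff_exists.mp hadj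
      rw [if_pos hadj]
      have uniq : ∀ v, (v ∈ (e : Sym2 V) ∧ v ∈ (f : Sym2 V)) ↔ v = c := by
        intro v
        constructor
        · rintro ⟨hv1, hv2⟩
          by_contra hvc
          have he' : (e : Sym2 V) = s(v, c) := (Sym2.mem_and_mem_iff hvc).mp ⟨hv1, hc1⟩
          have hf' : (f : Sym2 V) = s(v, c) := (Sym2.mem_and_mem_iff hvc).mp ⟨hv2, hc2⟩
          exact hef (Subtype.ext (he'.trans hf'.symm))
        · rintro rfl; exact ⟨hc1, hc2⟩
      have step : ∀ v, (if v ∈ (e : Sym2 V) then (1:ℝ) else 0) * (if v ∈ (f : Sym2 V) then (1:ℝ) else 0)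
          = if v = c then (1:ℝ) else 0 := by
        intro v
        by_cases h1 : v ∈ (e : Sym2 V) <;> by_cases h2 : v ∈ (f : Sym2 V) <;>
          simp [h1, h2, ← uniq v]
      rw [Finset.sum_congr rfl fun v _ => step v]
      simp
    · rw [if_neg hadj]
      have hnone : ∀ v, ¬(v ∈ (e : Sym2 V) ∧ v ∈ (f : Sym2 V)) := by
        intro v hv
        exact hadj (SimpleGraph.lineGraph_adj_iff_exists.mpr ⟨hef, v, hv⟩)
      refine Finset.sum_eq_zero fun v _ => ?_
      by_cases h1 : v ∈ (e : Sym2 V) <;> by_cases h2 : v ∈ (f : Sym2 V) <;> simp [h1, h2]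
      exact absurd ⟨h1, h2⟩ (hnone v)

lemma adj_zp1_inl_inl (u v : V) :
    (xyzTransform G .zero .plus .one).Adj (Sum.inl u) (Sum.inl v) ↔ False := Iff.rfl
lemma adj_zp1_inl_inr (v : V) (e : G.edgeSet) :
    (xyzTransform G .zero .plus .one).Adj (Sum.inl v) (Sum.inr e) ↔ True := Iff.rfl
lemma adj_zp1_inr_inl (v : V) (e : G.edgeSet) :
    (xyzTransform G .zero .plus .one).Adj (Sum.inr e) (Sum.inl v) ↔ True := Iff.rfl
lemma adj_zp1_inr_inr (e f : G.edgeSet) :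
    (xyzTransform G .zero .plus .one).Adj (Sum.inr e) (Sum.inr f) ↔ G.lineGraph.Adj e f :=
  Iff.rfl

/-- The main determinant computation, valid away from three bad values of `lam`. -/
lemma key_det (G : SimpleGraph V) (r n m : ℕ)
    (hn : Fintype.card V = n) (hm : Fintype.card G.edgeSet = m)
    (hreg : G.IsRegularOfDegree r) (hr2 : 2 ≤ r) (hn0 : 0 < n)
    (q : Fin n → ℝ)
    (hlast : q ⟨n - 1, Nat.sub_lt hn0 Nat.one_pos⟩ = 2 * r)
    (hq : ∀ x : ℝ, fQ G x = ∏ i : Fin n, (x - q i))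
    (lam : ℝ) (h1 : lam - m ≠ 0) (h2 : lam - n - 2*r + 4 ≠ 0)
    (h3 : lam - n - 2*r + 4 - 2*r ≠ 0) :
      fQ (xyzTransform G XYZ.zero XYZ.plus XYZ.one) lam =
        ((lam - m) * (lam - n - 4 * r + 4) - m * n) * (lam - n - 2 * r + 4) ^ (m - n) *
          (lam - m) ^ (n - 1) *
          ∏ i : Fin (n - 1), (lam - n - 2 * r + 4 - (q (Fin.castLE (Nat.sub_le n 1) i))) := by
  set E := G.edgeSet with hE
  set N : Matrix V E ℝ := incMat G with hNdef
  -- basic counting facts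
  have hrn : r * n = 2 * m := by
    have h := G.sum_degrees_eq_twice_card_edges
    rw [Finset.sum_congr rfl fun v _ => hreg v, Finset.sum_const, Finset.card_univ, hn,
      smul_eq_mul, G.edgeFinset_card, hm] at h
    rw [Nat.mul_comm]
    exact h
  have hnm : n ≤ m := by
    have h2n : 2 * n ≤ r * n := Nat.mul_le_mul_right n hr2
    omega
  have hcardE : Fintype.card E = m := hm
  have hNrow : ∀ v : V, ∑ e : E, N v e = (r : ℝ) := by
    intro v
    rw [hNdef, sum_incMat_col, hreg v]
  have hNcol : ∀ e : E, ∑ v, N v e = 2 := sum_incMat_row G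
  have hNNT : N * Nᵀ = signlessLaplacian G := incMat_mul_transpose G
  have hNTN : ∀ e f : E, (Nᵀ * N) e f
      = if e = f then 2 else (if G.lineGraph.Adj e f then 1 else 0) := transpose_mul_incMat G
  have hrowsumNTN : ∀ e : E, ∑ f : E, (Nᵀ * N) e f = 2 * r := by
    intro e
    have swap : ∑ f : E, (Nᵀ * N) e f = ∑ v : V, N v e * ∑ f : E, N v f := by
      simp only [Matrix.mul_apply, transpose_apply]
      rw [Finset.sum_comm]
      exact Finset.sum_congr rfl fun v _ => by rw [Finset.mul_sum]
    rw [swap, Finset.sum_congr rfl fun v _ => by rw [hNrow v], ← Finset.sum_mul, hNcol e]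
  have hLdeg : ∀ e : E, ∑ f : E, (if G.lineGraph.Adj e f then (1:ℝ) else 0) = 2 * r - 2 := by
    intro e
    have h := hrowsumNTN e
    rw [Finset.sum_congr rfl fun f _ => hNTN e f] at h
    have step : ∀ f : E, (if e = f then (2:ℝ) else (if G.lineGraph.Adj e f then 1 else 0))
        = (if G.lineGraph.Adj e f then (1:ℝ) else 0) + (if f = e then (2:ℝ) else 0) := by
      intro f
      by_cases hfe : f = e
      · subst hfe
        simp [G.lineGraph.irrefl]
      · rw [if_neg (Ne.symm hfe), if_neg hfe, add_zero]
    rw [Finset.sum_congr rfl fun f _ => step f, Finset.sum_add_distrib] at h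
    simp only [Finset.sum_ite_eq', Finset.mem_univ, if_pos] at h
    linarith
  -- degrees in the transform
  have hdegV : ∀ v : V, (((xyzTransform G XYZ.zero XYZ.plus XYZ.one).degree (Sum.inl v) : ℝ)) = m := by
    intro v
    rw [degree_real, Fintype.sum_sum_type]
    simp only [adj_zp1_inl_inl, adj_zp1_inl_inr, if_false, if_true]
    rw [Finset.sum_const, Finset.sum_const, Finset.card_univ, Finset.card_univ, hcardE]
    simp
  have hdegE : ∀ e : E, (((xyzTransform G XYZ.zero XYZ.plus XYZ.one).degree (Sum.inr e) : ℝ))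
      = n + (2 * r - 2) := by
    intro e
    rw [degree_real, Fintype.sum_sum_type]
    have hVpart : ∑ v : V, (if (xyzTransform G XYZ.zero XYZ.plus XYZ.one).Adj (Sum.inr e) (Sum.inl v)
        then (1:ℝ) else 0) = n := by
      simp only [adj_zp1_inr_inl, if_true]
      rw [Finset.sum_const, Finset.card_univ, hn]
      simp
    have hEpart : ∑ f : E, (if (xyzTransform G XYZ.zero XYZ.plus XYZ.one).Adj (Sum.inr e) (Sum.inr f)
        then (1:ℝ) else 0) = 2 * r - 2 := by
      simp only [adj_zp1_inr_inr]
      exact hLdeg e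
    rw [hVpart, hEpart]
  -- the block decomposition
  have hQblock : lam • (1 : Matrix (V ⊕ E) (V ⊕ E) ℝ)
      - signlessLaplacian (xyzTransform G XYZ.zero XYZ.plus XYZ.one)
      = fromBlocks ((lam - m) • (1 : Matrix V V ℝ))
          (-(Matrix.of fun (_ : V) (_ : E) => (1:ℝ)))
          (-(Matrix.of fun (_ : E) (_ : V) => (1:ℝ)))
          ((lam - n - 2*r + 4) • (1 : Matrix E E ℝ) - Nᵀ * N) := by
    ext i j
    rcases i with u | e <;> rcases j with v | f
    · simp only [Matrix.sub_apply, Matrix.smul_apply, one_apply, signlessLaplacian, Matrix.of_apply,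
        fromBlocks_apply₁₁, Sum.inl.injEq, smul_eq_mul]
      rw [if_neg (fun h => (adj_zp1_inl_inl G u v).mp h)]
      by_cases huv : u = v
      · subst huv
        rw [if_pos rfl, if_pos rfl, hdegV u]
        ring
      · rw [if_neg huv, if_neg huv]
        simp
    · simp only [Matrix.sub_apply, Matrix.smul_apply, one_apply, signlessLaplacian, Matrix.of_apply,
        fromBlocks_apply₁₂, smul_eq_mul, Matrix.neg_apply]
      rw [if_pos ((adj_zp1_inl_inr G u f).mpr trivial), if_neg (by simp)]
      simp
    · simp only [Matrix.sub_apply, Matrix.smul_apply, one_apply, signlessLaplacian, Matrix.of_apply,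
        fromBlocks_apply₂₁, smul_eq_mul, Matrix.neg_apply]
      rw [if_pos ((adj_zp1_inr_inl G v e).mpr trivial), if_neg (by simp)]
      simp
    · simp only [Matrix.sub_apply, Matrix.smul_apply, one_apply, signlessLaplacian, Matrix.of_apply,
        fromBlocks_apply₂₂, Sum.inr.injEq, smul_eq_mul]
      rw [hNTN e f]
      by_cases hef : e = f
      · subst hef
        rw [if_pos rfl, if_pos rfl, if_pos rfl, hdegE e,
          if_neg (fun h => G.lineGraph.irrefl ((adj_zp1_inr_inr G e e).mp h))]
        push_cast
        ring
      · rw [if_neg hef, if_neg hef,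
          (by rfl : (if (xyzTransform G XYZ.zero XYZ.plus XYZ.one).Adj (Sum.inr e) (Sum.inr f)
            then (1:ℝ) else 0) = if G.lineGraph.Adj e f then (1:ℝ) else 0)]
        simp [hef]
  -- determinant computation
  letI instInv : Invertible ((lam - m) • (1 : Matrix V V ℝ)) :=
    ⟨(lam - m)⁻¹ • (1 : Matrix V V ℝ),
      by rw [Matrix.smul_mul, Matrix.mul_smul, smul_smul, inv_mul_cancel₀ h1, Matrix.mul_one,
        one_smul],
      by rw [Matrix.smul_mul, Matrix.mul_smul, smul_smul, mul_inv_cancel₀ h1, Matrix.mul_one,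
        one_smul]⟩
  have hfq : fQ (xyzTransform G XYZ.zero XYZ.plus XYZ.one) lam
      = det ((lam - m) • (1 : Matrix V V ℝ)) *
        det (((lam - n - 2*r + 4) • (1 : Matrix E E ℝ) - Nᵀ * N)
          - (-(Matrix.of fun (_ : E) (_ : V) => (1:ℝ))) * ⅟((lam - m) • (1 : Matrix V V ℝ))
            * (-(Matrix.of fun (_ : V) (_ : E) => (1:ℝ)))) := by
    have h := congrArg Matrix.det hQblock
    rw [det_fromBlocks₁₁] at h
    rw [fQ]
    convert h using 2
    ext i j
    simp [Matrix.one_apply]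
  have hinv : ⅟((lam - m) • (1 : Matrix V V ℝ)) = (lam - m)⁻¹ • (1 : Matrix V V ℝ) := rfl
  set c1 : ℝ := (lam - m)⁻¹ * (n:ℝ) with hc1
  set c2 : ℝ := c1 / ((lam - n - 2*r + 4) - 2*r) with hc2
  have hJJ : (Matrix.of fun (_ : E) (_ : V) => (1:ℝ)) * (Matrix.of fun (_ : V) (_ : E) => (1:ℝ))
      = (n:ℝ) • (Matrix.of fun (_ : E) (_ : E) => (1:ℝ)) := by
    ext e f
    simp [Matrix.mul_apply, Finset.card_univ, hn]
  have hCAB : (-(Matrix.of fun (_ : E) (_ : V) => (1:ℝ))) * ((lam - m)⁻¹ • (1 : Matrix V V ℝ))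
      * (-(Matrix.of fun (_ : V) (_ : E) => (1:ℝ)))
      = c1 • (Matrix.of fun (_ : E) (_ : E) => (1:ℝ)) := by
    rw [Matrix.neg_mul, Matrix.mul_smul, Matrix.mul_one, Matrix.neg_mul, Matrix.mul_neg,
      neg_neg, Matrix.smul_mul, hJJ, smul_smul, hc1]
  have hMJ : (((lam - n - 2*r + 4) • (1 : Matrix E E ℝ)) - Nᵀ * N)
      * (Matrix.of fun (_ : E) (_ : E) => (1:ℝ))
      = ((lam - n - 2*r + 4) - 2*r) • (Matrix.of fun (_ : E) (_ : E) => (1:ℝ)) := by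
    ext e f
    rw [Matrix.mul_apply]
    simp only [Matrix.sub_apply, Matrix.smul_apply, one_apply, Matrix.of_apply, smul_eq_mul, mul_one]
    rw [Finset.sum_sub_distrib, hrowsumNTN e]
    simp [Finset.sum_ite_eq]
  have hfactor : ((lam - n - 2*r + 4) • (1 : Matrix E E ℝ) - Nᵀ * N)
        - c1 • (Matrix.of fun (_ : E) (_ : E) => (1:ℝ))
      = ((lam - n - 2*r + 4) • (1 : Matrix E E ℝ) - Nᵀ * N)
        * (1 - c2 • (Matrix.of fun (_ : E) (_ : E) => (1:ℝ))) := by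
    rw [Matrix.mul_sub, Matrix.mul_one, Matrix.mul_smul, hMJ, smul_smul]
    have hc : c2 * ((lam - n - 2*r + 4) - 2*r) = c1 := by
      rw [hc2]
      field_simp
    rw [hc]
  have hdetJ : det ((1 : Matrix E E ℝ) - c2 • (Matrix.of fun (_ : E) (_ : E) => (1:ℝ)))
      = 1 - m * c2 := by
    have hrep : (1 : Matrix E E ℝ) - c2 • (Matrix.of fun (_ : E) (_ : E) => (1:ℝ))
        = 1 + Matrix.replicateCol Unit (fun _ => -c2) * Matrix.replicateRow Unit (fun _ => (1:ℝ)) := by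
      ext e f
      simp [Matrix.mul_apply, sub_eq_add_neg]
    rw [hrep, det_one_add_replicateCol_mul_replicateRow]
    simp only [dotProduct]
    rw [Finset.sum_congr rfl fun e _ => (by ring : (1:ℝ) * (-c2) = -c2), Finset.sum_const,
      Finset.card_univ, hcardE]
    push_cast
    ring
  have hdetM : det ((lam - n - 2*r + 4) • (1 : Matrix E E ℝ) - Nᵀ * N)
      = (lam - n - 2*r + 4)^(m-n) * ∏ i : Fin n, ((lam - n - 2*r + 4) - q i) := by
    have e1 : (lam - n - 2*r + 4) • (1 : Matrix E E ℝ) - Nᵀ * N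
        = (lam - n - 2*r + 4) • ((1 : Matrix E E ℝ) - ((lam - n - 2*r + 4)⁻¹ • Nᵀ) * N) := by
      rw [smul_sub, Matrix.smul_mul, smul_smul, mul_inv_cancel₀ h2, one_smul]
    rw [e1, det_smul, det_one_sub_mul_comm]
    have e2 : (1 : Matrix V V ℝ) - N * ((lam - n - 2*r + 4)⁻¹ • Nᵀ)
        = (lam - n - 2*r + 4)⁻¹ • ((lam - n - 2*r + 4) • (1 : Matrix V V ℝ) - N * Nᵀ) := by
      rw [Matrix.mul_smul, smul_sub, smul_smul, inv_mul_cancel₀ h2, one_smul]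
    have e3 : det ((lam - n - 2*r + 4) • (1 : Matrix V V ℝ) - signlessLaplacian G)
        = ∏ i : Fin n, ((lam - n - 2*r + 4) - q i) := hq _
    rw [e2, det_smul, hNNT, e3, hcardE, hn, inv_pow, pow_sub₀ _ h2 hnm]
    field_simp
  have hsplit : ∏ i : Fin n, ((lam - n - 2*r + 4) - q i)
      = ((lam - n - 2*r + 4) - 2*r)
        * ∏ i : Fin (n - 1), ((lam - n - 2*r + 4) - q (Fin.castLE (Nat.sub_le n 1) i)) := by
    rcases n with - | k
    · omega
    · rw [Fin.prod_univ_castSucc]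
      have hl : q (Fin.last k) = 2*r := hlast
      rw [hl, mul_comm]
      congr 1
  have hdetA : det ((lam - m) • (1 : Matrix V V ℝ)) = (lam - m)^n := by
    rw [det_smul, det_one, hn, mul_one]
  have hpow : (lam - m)^n = (lam - m)^(n-1) * (lam - m) := by
    rw [← pow_succ, Nat.sub_add_cancel hn0]
  rw [hfq, hinv, hCAB, hfactor, det_mul, hdetJ, hdetM, hsplit, hdetA, hpow, hc2, hc1]
  have hbad : ((lam - n - 2*r + 4) - 2*r) ≠ 0 := h3
  field_simp
  ring

end XYZAux

theorem signless_charpoly_xyz_zp1 {V : Type*} [Fintype V] (G : SimpleGraph V) (r n m : ℕ)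
    (hn : Fintype.card V = n) (hm : Fintype.card G.edgeSet = m)
    (hreg : G.IsRegularOfDegree r) (hr2 : 2 ≤ r) (hn0 : 0 < n)
    (q : Fin n → ℝ) (hmono : Monotone q)
    (hlast : q ⟨n - 1, by omega⟩ = 2 * r)
    (hq : ∀ x : ℝ, fQ G x = ∏ i : Fin n, (x - q i)) :
    ∀ lam : ℝ,
      fQ (xyzTransform G XYZ.zero XYZ.plus XYZ.one) lam =
        ((lam - m) * (lam - n - 4 * r + 4) - m * n) * (lam - n - 2 * r + 4) ^ (m - n) *
          (lam - m) ^ (n - 1) *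
          ∏ i : Fin (n - 1), (lam - n - 2 * r + 4 - (q (Fin.castLE (Nat.sub_le n 1) i))) := by
  intro lam
  have hdense : Dense (({(m:ℝ), (n:ℝ)+2*r-4, (n:ℝ)+4*r-4} : Set ℝ)ᶜ) :=
    (Set.toFinite _).countable.dense_compl ℝ
  have hcont1 : Continuous fun x : ℝ => fQ (xyzTransform G XYZ.zero XYZ.plus XYZ.one) x := by
    unfold fQ
    have h : Continuous fun x : ℝ =>
        Matrix.det (x • (1 : Matrix (V ⊕ G.edgeSet) (V ⊕ G.edgeSet) ℝ)
          - signlessLaplacian (xyzTransform G XYZ.zero XYZ.plus XYZ.one)) :=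
      Continuous.matrix_det ((continuous_id.smul continuous_const).sub continuous_const)
    convert h using 1
    funext x
    congr 1
    ext i j
    simp [Matrix.one_apply]
  have hcont2 : Continuous fun x : ℝ =>
      ((x - m) * (x - n - 4 * r + 4) - m * n) * (x - n - 2 * r + 4) ^ (m - n) *
        (x - m) ^ (n - 1) *
        ∏ i : Fin (n - 1), (x - n - 2 * r + 4 - (q (Fin.castLE (Nat.sub_le n 1) i))) := by
    apply Continuous.mul
    · apply Continuous.mul
      · apply Continuous.mul <;> fun_prop
      · fun_prop
    · exact continuous_finset_prod _ fun i _ => by fun_prop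
  have heq : Set.EqOn (fun x : ℝ => fQ (xyzTransform G XYZ.zero XYZ.plus XYZ.one) x)
      (fun x : ℝ =>
        ((x - m) * (x - n - 4 * r + 4) - m * n) * (x - n - 2 * r + 4) ^ (m - n) *
          (x - m) ^ (n - 1) *
          ∏ i : Fin (n - 1), (x - n - 2 * r + 4 - (q (Fin.castLE (Nat.sub_le n 1) i))))
      (({(m:ℝ), (n:ℝ)+2*r-4, (n:ℝ)+4*r-4} : Set ℝ)ᶜ) := by
    intro x hx
    simp only [Set.mem_compl_iff, Set.mem_insert_iff, Set.mem_singleton_iff, not_or] at hx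
    obtain ⟨hx1, hx2, hx3⟩ := hx
    exact XYZAux.key_det G r n m hn hm hreg hr2 hn0 q hlast hq x
      (sub_ne_zero.mpr hx1) (fun h => hx2 (by linarith)) (fun h => hx3 (by linarith))
  exact congrFun (Continuous.ext_on hdense hcont1 hcont2 heq) lam
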